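/- Let μ > 0 with μ ≠ 1, and define F(x,y) = x²·y^(−2/μ) − y^(2−2/μ)/(μ−1) on the open upper half-plane {y > 0}. Then F is a first integral of the system ẋ = x² + y², ẏ = μxy: for all x ∈ ℝ and y > 0, (x² + y²)·∂F/∂x(x,y) + μxy·∂F/∂y(x,y) = 0. In particular, for each a ∈ ℝ the curve {x² = a·y^(2/μ) + y²/(μ−1)} is invariant under the phase flow of the system in {y > 0}. -/

import Mathlib

open Real

noncomputable def F (μ x y : ℝ) : ℝ :=
  x ^ 2 * y ^ (-2 / μ) - y ^ (2 - 2 / μ) / (μ - 1)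

lemma hDx (μ x y : ℝ) :
    HasDerivAt (fun x' => F μ x' y) (2 * x * y ^ (-2 / μ)) x := by
  have h := ((hasDerivAt_pow 2 x).mul_const (y ^ (-2 / μ))).sub_const
    (y ^ (2 - 2 / μ) / (μ - 1))
  simpa [F, mul_comm, mul_assoc, mul_left_comm] using h

lemma hDy (μ x y : ℝ) (hy : 0 < y) :
    HasDerivAt (fun y' => F μ x y')
      (x ^ 2 * (-2 / μ * y ^ (-2 / μ - 1)) - (2 - 2 / μ) * y ^ (2 - 2 / μ - 1) / (μ - 1)) y := by
  have h1 := (Real.hasDerivAt_rpow_const (p := -2 / μ) (Or.inl hy.ne')).const_mul (x ^ 2)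
  have h2 := (Real.hasDerivAt_rpow_const (p := 2 - 2 / μ) (Or.inl hy.ne')).div_const (μ - 1)
  exact h1.sub h2

lemma key (μ x y : ℝ) (hμ : 0 < μ) (hμ1 : μ ≠ 1) (hy : 0 < y) :
    (x ^ 2 + y ^ 2) * (2 * x * y ^ (-2 / μ)) +
      μ * x * y * (x ^ 2 * (-2 / μ * y ^ (-2 / μ - 1)) - (2 - 2 / μ) * y ^ (2 - 2 / μ - 1) / (μ - 1)) = 0 := by
  have hy' := hy.ne'
  have e1 : y ^ (-2 / μ - 1) = y ^ (-2 / μ) / y := by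
    rw [Real.rpow_sub hy, Real.rpow_one]
  have e2 : y ^ (2 - 2 / μ - 1) = y ^ (2 - 2 / μ) / y := by
    rw [Real.rpow_sub hy, Real.rpow_one]
  have e3 : y ^ (2 - 2 / μ) = y ^ 2 * y ^ (-2 / μ) := by
    rw [← Real.rpow_natCast y 2, ← Real.rpow_add hy]
    congr 1; push_cast; ring
  rw [e1, e2, e3]
  have hμ0 : μ ≠ 0 := hμ.ne'
  have hμm : μ - 1 ≠ 0 := sub_ne_zero.mpr hμ1
  field_simp
  ring

lemma Fiff (μ a x y : ℝ) (hμ : 0 < μ) (hy : 0 < y) :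
    F μ x y = a ↔ x ^ 2 = a * y ^ (2 / μ) + y ^ 2 / (μ - 1) := by
  have hpos : (0:ℝ) < y ^ (2 / μ) := Real.rpow_pos_of_pos hy _
  have h1 : y ^ (-2 / μ) * y ^ (2 / μ) = 1 := by
    rw [← Real.rpow_add hy, show -2 / μ + 2 / μ = 0 by ring, Real.rpow_zero]
  have h2 : y ^ (2 - 2 / μ) * y ^ (2 / μ) = y ^ 2 := by
    rw [← Real.rpow_add hy, show 2 - 2 / μ + 2 / μ = ((2:ℕ):ℝ) by push_cast; ring, Real.rpow_natCast]
  constructor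
  · intro h
    have := congrArg (· * y ^ (2 / μ)) h
    simp only [F, sub_mul, mul_assoc, h1, h2, div_mul_eq_mul_div] at this
    linarith [this]
  · intro h
    have h' : F μ x y * y ^ (2 / μ) = a * y ^ (2 / μ) := by
      simp only [F, sub_mul, mul_assoc, h1, h2, div_mul_eq_mul_div]
      linarith [h]
    exact mul_right_cancel₀ hpos.ne' h'

lemma key2 (μ X Y : ℝ) (hμ : 0 < μ) (hμ1 : μ ≠ 1) (hy : 0 < Y) :
    (2:ℝ) * X ^ 1 * (X ^ 2 + Y ^ 2) * Y ^ (-2 / μ) + X ^ 2 * (μ * X * Y * (-2 / μ) * Y ^ (-2 / μ - 1))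
      - μ * X * Y * (2 - 2 / μ) * Y ^ (2 - 2 / μ - 1) / (μ - 1) = 0 := by
  have hy' := hy.ne'
  have e1 : Y ^ (-2 / μ - 1) = Y ^ (-2 / μ) / Y := by
    rw [Real.rpow_sub hy, Real.rpow_one]
  have e2 : Y ^ (2 - 2 / μ - 1) = Y ^ (2 - 2 / μ) / Y := by
    rw [Real.rpow_sub hy, Real.rpow_one]
  have e3 : Y ^ (2 - 2 / μ) = Y ^ 2 * Y ^ (-2 / μ) := by
    rw [← Real.rpow_natCast Y 2, ← Real.rpow_add hy]
    congr 1; push_cast; ring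
  rw [e1, e2, e3]
  have hμ0 : μ ≠ 0 := hμ.ne'
  have hμm : μ - 1 ≠ 0 := sub_ne_zero.mpr hμ1
  field_simp
  ring

theorem stmt17 (μ : ℝ) (hμ : 0 < μ) (hμ1 : μ ≠ 1) :
    (∀ x y : ℝ, 0 < y →
      (x ^ 2 + y ^ 2) * deriv (fun x' => F μ x' y) x +
        μ * x * y * deriv (fun y' => F μ x y') y = 0) ∧
    (∀ a : ℝ, ∀ x y : ℝ → ℝ,
      (∀ t, HasDerivAt x (x t ^ 2 + y t ^ 2) t) →
      (∀ t, HasDerivAt y (μ * x t * y t) t) →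
      (∀ t, 0 < y t) →
      ∀ t₀ : ℝ, x t₀ ^ 2 = a * y t₀ ^ (2 / μ) + y t₀ ^ 2 / (μ - 1) →
        ∀ t : ℝ, x t ^ 2 = a * y t ^ (2 / μ) + y t ^ 2 / (μ - 1)) := by
  constructor
  · intro x y hy
    rw [(hDx μ x y).deriv, (hDy μ x y hy).deriv]
    exact key μ x y hμ hμ1 hy
  · intro a x y hx hy hypos t₀ h0 t
    set g : ℝ → ℝ := fun t => F μ (x t) (y t) with hg
    have hgd : ∀ t, HasDerivAt g 0 t := by
      intro t
      have d1 : HasDerivAt (fun t => x t ^ 2)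
          ((2:ℕ) * x t ^ 1 * (x t ^ 2 + y t ^ 2)) t := (hx t).pow 2
      have d2 : HasDerivAt (fun t => y t ^ (-2 / μ))
          ((μ * x t * y t) * (-2 / μ) * y t ^ (-2 / μ - 1)) t :=
        (hy t).rpow_const (Or.inl (hypos t).ne')
      have d3 : HasDerivAt (fun t => y t ^ (2 - 2 / μ))
          ((μ * x t * y t) * (2 - 2 / μ) * y t ^ (2 - 2 / μ - 1)) t :=
        (hy t).rpow_const (Or.inl (hypos t).ne')
      have h := (d1.mul d2).sub (d3.div_const (μ - 1))
      have hF : g = fun t => x t ^ 2 * y t ^ (-2 / μ) - y t ^ (2 - 2 / μ) / (μ - 1) := rfl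
      rw [hF]
      refine h.congr_deriv ?_
      push_cast
      exact key2 μ (x t) (y t) hμ hμ1 (hypos t)
    have hconst : g t = g t₀ :=
      is_const_of_deriv_eq_zero (fun s => (hgd s).differentiableAt)
        (fun s => (hgd s).deriv) t t₀
    have h0' : g t₀ = a := (Fiff μ a (x t₀) (y t₀) hμ (hypos t₀)).mpr h0
    exact (Fiff μ a (x t) (y t) hμ (hypos t)).mp (hconst.trans h0')
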